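/- Let P be a finite subset of the polynomial ring R = k[x_1,...,x_n], and let P_0, P_1, ..., P_r be subsets of P such that: (a) P_0 ∪ P_1 ∪ ... ∪ P_r = P; (b) P_0 has exactly one element; (c) if p and p'' are different elements of P_i (for 0 < i ≤ r), then there is an integer j with 0 ≤ j < i and an element p' ∈ P_j such that pp'' ∈ (p'). For each i let q_i = Σ_{p ∈ P_i} p. Then the radical of the ideal generated by P equals the radical of the ideal (q_0, ..., q_r). -/

import Mathlib

open MvPolynomial

namespace PaperDefs

variable {k : Type*} [Field k] {n : ℕ}

/-- The total degree of an exponent vector. -/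
def edeg (a : Fin n →₀ ℕ) : ℕ := ∑ i, a i

/-- `I` is a monomial ideal: it is generated by a set of monomials. -/
def IsMonomialIdeal (I : Ideal (MvPolynomial (Fin n) k)) : Prop :=
  ∃ S : Set (Fin n →₀ ℕ),
    I = Ideal.span ((fun a => (MvPolynomial.monomial a (1 : k))) '' S)

/-- The (exponent vectors of the) unique minimal monomial generating set `G(I)`:
monomials of `I` that are minimal with respect to divisibility. -/
def minGens (I : Ideal (MvPolynomial (Fin n) k)) : Set (Fin n →₀ ℕ) :=
  {a | (MvPolynomial.monomial a (1 : k)) ∈ I ∧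
    ∀ b : Fin n →₀ ℕ, b < a → (MvPolynomial.monomial b (1 : k)) ∉ I}

/-- A squarefree exponent vector. -/
def SqFree (a : Fin n →₀ ℕ) : Prop := ∀ i, a i ≤ 1

/-- `I` is a polymatroidal ideal of degree `d`. -/
def IsPolymatroidal (I : Ideal (MvPolynomial (Fin n) k)) (d : ℕ) : Prop :=
  IsMonomialIdeal I ∧ I ≠ ⊥ ∧
  (∀ a ∈ minGens I, edeg a = d) ∧
  ∀ a ∈ minGens I, ∀ b ∈ minGens I, ∀ i : Fin n, b i < a i →
    ∃ j : Fin n, a j < b j ∧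
      (MvPolynomial.monomial (a - Finsupp.single i 1 + Finsupp.single j 1) (1 : k)) ∈ I

/-- `I` is a matroidal ideal of degree `d`: a squarefree polymatroidal ideal. -/
def IsMatroidal (I : Ideal (MvPolynomial (Fin n) k)) (d : ℕ) : Prop :=
  IsPolymatroidal I d ∧ ∀ a ∈ minGens I, SqFree a

/-- `I` is full-supported: every variable divides some minimal generator. -/
def FullSupported (I : Ideal (MvPolynomial (Fin n) k)) : Prop :=
  ∀ i : Fin n, ∃ a ∈ minGens I, a i ≠ 0

/-- The maximal graded ideal `(x_1, ..., x_n)`. -/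
noncomputable def varIdeal (k : Type*) [Field k] (n : ℕ) : Ideal (MvPolynomial (Fin n) k) :=
  Ideal.span (Set.range MvPolynomial.X)

/-- The colon ideal `(I : x_i)`. -/
noncomputable def colonVar (I : Ideal (MvPolynomial (Fin n) k)) (i : Fin n) :
    Ideal (MvPolynomial (Fin n) k) :=
  I.colon ((Ideal.span {MvPolynomial.X i} : Ideal (MvPolynomial (Fin n) k)) : Set (MvPolynomial (Fin n) k))

/-- The height of an ideal: the infimum of `Order.height` over the primes containing it. -/
noncomputable def ht {R : Type*} [CommRing R] (I : Ideal R) : ℕ∞ :=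
  ⨅ (p : PrimeSpectrum R) (_ : I ≤ p.asIdeal), Order.height p

/-- `I` is unmixed: all associated primes of `R/I` have the same height. -/
def IsUnmixed (I : Ideal (MvPolynomial (Fin n) k)) : Prop :=
  ∀ p ∈ associatedPrimes (MvPolynomial (Fin n) k) (MvPolynomial (Fin n) k ⧸ I),
    ∀ q ∈ associatedPrimes (MvPolynomial (Fin n) k) (MvPolynomial (Fin n) k ⧸ I),
      ht p = ht q

/-- The arithmetical rank of `I`. -/
noncomputable def ara (I : Ideal (MvPolynomial (Fin n) k)) : ℕ :=
  sInf {t : ℕ | ∃ f : Fin t → MvPolynomial (Fin n) k,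
    (Ideal.span (Set.range f)).radical = I.radical}

/-- The squarefree Veronese ideal of degree `d`. -/
noncomputable def sqfreeVeronese (k : Type*) [Field k] (n d : ℕ) : Ideal (MvPolynomial (Fin n) k) :=
  Ideal.span ((fun s : Finset (Fin n) => ∏ i ∈ s, MvPolynomial.X i) ''
    {s : Finset (Fin n) | s.card = d})

/-- The depth of `R/I` : the supremum of lengths of `R/I`-regular sequences consisting of
elements of the maximal graded ideal. -/
noncomputable def quotDepth (I : Ideal (MvPolynomial (Fin n) k)) : ℕ :=
  sSup {r : ℕ | ∃ rs : List (MvPolynomial (Fin n) k), rs.length = r ∧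
    (∀ x ∈ rs, x ∈ varIdeal k n) ∧
    RingTheory.Sequence.IsRegular (MvPolynomial (Fin n) k ⧸ I) rs}

/-- `R/I` is Cohen–Macaulay: the depth of `R/I` equals its Krull dimension. -/
def IsCohenMacaulayQuot (I : Ideal (MvPolynomial (Fin n) k)) : Prop :=
  (quotDepth I : WithBot ℕ∞) = ringKrullDim (MvPolynomial (Fin n) k ⧸ I)

end PaperDefs

open PaperDefs in
/-- Lemma 2.1, Schmitt–Vogel. Let `P` be a finite subset of `R` and
`P_0, ..., P_r` subsets of `P` covering `P`, with `P_0` a singleton, such that for any two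
distinct `p, p'' ∈ P_i` (`0 < i`) there are `j < i` and `p' ∈ P_j` with `p·p'' ∈ (p')`.
Setting `q_i = Σ_{p ∈ P_i} p`, we have `√(P) = √(q_0, ..., q_r)`. -/
theorem statement10 {k : Type*} [Field k] {n : ℕ} (r : ℕ)
    (P : Finset (MvPolynomial (Fin n) k))
    (Ps : Fin (r + 1) → Finset (MvPolynomial (Fin n) k))
    (hsub : ∀ i, Ps i ⊆ P)
    (hcover : ∀ p ∈ P, ∃ i, p ∈ Ps i)
    (hP0 : (Ps 0).card = 1)
    (hchain : ∀ i : Fin (r + 1), 0 < i → ∀ p ∈ Ps i, ∀ p'' ∈ Ps i, p ≠ p'' →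
      ∃ j, j < i ∧ ∃ p' ∈ Ps j, p * p'' ∈ Ideal.span {p'}) :
    (Ideal.span (P : Set (MvPolynomial (Fin n) k))).radical =
      (Ideal.span (Set.range fun i : Fin (r + 1) => ∑ p ∈ Ps i, p)).radical := by
  classical
  set J := Ideal.span (Set.range fun i : Fin (r + 1) => ∑ p ∈ Ps i, p) with hJ
  have hq : ∀ i : Fin (r + 1), (∑ p ∈ Ps i, p) ∈ J :=
    fun i => Ideal.subset_span ⟨i, rfl⟩
  have key : ∀ m : ℕ, ∀ hm : m < r + 1, ∀ p ∈ Ps ⟨m, hm⟩, p ∈ J.radical := by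
    intro m
    induction m using Nat.strong_induction_on with
    | _ m ih =>
      intro hm p hp
      rcases Nat.eq_zero_or_pos m with h0 | hpos
      · subst h0
        have h00 : (⟨0, hm⟩ : Fin (r + 1)) = 0 := by ext; simp
        rw [h00] at hp
        obtain ⟨a, ha⟩ := Finset.card_eq_one.mp hP0
        rw [ha, Finset.mem_singleton] at hp
        subst hp
        have := hq 0
        rw [ha, Finset.sum_singleton] at this
        exact Ideal.le_radical this
      · set i : Fin (r + 1) := ⟨m, hm⟩ with hi
        have hipos : 0 < i := by
          rw [Fin.lt_def, Fin.val_zero]; exact hpos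
        have h1 : p * (∑ p'' ∈ Ps i, p'') ∈ J.radical :=
          Ideal.mul_mem_left _ _ (Ideal.le_radical (hq i))
        have h2 : (∑ p'' ∈ (Ps i).erase p, p * p'') ∈ J.radical := by
          refine Ideal.sum_mem _ (fun p'' hp'' => ?_)
          obtain ⟨hne, hmem⟩ := Finset.mem_erase.mp hp''
          obtain ⟨j, hj, p', hp', hdvd⟩ := hchain i hipos p hp p'' hmem (Ne.symm hne)
          have hp'rad : p' ∈ J.radical := ih j.val hj j.isLt p' hp'
          have : Ideal.span {p'} ≤ J.radical :=
            (Ideal.span_le).mpr (Set.singleton_subset_iff.mpr hp'rad)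
          exact this hdvd
        have e : p * p + ∑ p'' ∈ (Ps i).erase p, p * p'' = p * ∑ p'' ∈ Ps i, p'' := by
          rw [Finset.mul_sum]
          exact Finset.add_sum_erase _ _ hp
        have h3 : p * p ∈ J.radical := by
          have : p * p = p * (∑ p'' ∈ Ps i, p'') - ∑ p'' ∈ (Ps i).erase p, p * p'' :=
            eq_sub_of_add_eq e
          rw [this]; exact Ideal.sub_mem _ h1 h2
        have : p ∈ J.radical.radical := by
          rw [Ideal.mem_radical_iff]
          exact ⟨2, by simpa [sq] using h3⟩
        rwa [Ideal.radical_idem] at this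
  apply le_antisymm
  · rw [← Ideal.radical_idem (I := J)]
    apply Ideal.radical_mono
    rw [Ideal.span_le]
    intro p hp
    obtain ⟨i, hi⟩ := hcover p hp
    exact key i.val i.isLt p (by simpa using hi)
  · apply Ideal.radical_mono
    rw [Ideal.span_le]
    rintro _ ⟨i, rfl⟩
    exact Ideal.sum_mem _ fun p hp => Ideal.subset_span (hsub i hp)
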